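/- (Asymptotic Gilbert–Varshamov bound via code spectra) Let F_n be the uniform random linear code x ↦ x·A over F_q with A an n×m_n matrix of i.i.d. uniform entries, and let R̄ = limsup_n n/m_n. Define Δ_n = 1 − max_{x ≠ 0} P_{F_n(x)}(0) (the normalized minimum distance). Then liminf in probability of [h(Δ_n) + Δ_n ln(q−1)] ≥ (1 − R̄) ln q, where h(x) = −x ln x − (1−x) ln(1−x). -/

import Mathlib

open Finset Filter

open scoped Classical

noncomputable def empDist {X : Type*} [Fintype X] {n : ℕ} (x : Fin n → X) : X → ℝ :=
  fun a => ((univ.filter fun i => x i = a).card : ℝ) / n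

noncomputable def specS {X : Type*} [Fintype X] {n : ℕ}
    (A : Finset (Fin n → X)) (P : X → ℝ) : ℝ :=
  ((A.filter fun x => empDist x = P).card : ℝ) / (A.card : ℝ)

noncomputable def jointSpec {X Y : Type*} [Fintype X] [Fintype Y] {n m : ℕ}
    (f : (Fin n → X) → (Fin m → Y)) (P : X → ℝ) (Q : Y → ℝ) : ℝ :=
  ((univ.filter fun x : Fin n → X => empDist x = P ∧ empDist (f x) = Q).card : ℝ) /
    ((Fintype.card X : ℝ) ^ n)

noncomputable def fullJointSpec (X Y : Type*) [Fintype X] [Fintype Y] (n m : ℕ)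
    (P : X → ℝ) (Q : Y → ℝ) : ℝ :=
  specS (univ : Finset (Fin n → X)) P * specS (univ : Finset (Fin m → Y)) Q

noncomputable def alphaE {X Y : Type*} [Fintype X] [Fintype Y] {n m : ℕ} {Ω : Type*}
    [Fintype Ω] (μ : Ω → ℝ) (F : Ω → (Fin n → X) → (Fin m → Y))
    (P : X → ℝ) (Q : Y → ℝ) : ℝ :=
  (∑ ω, μ ω * jointSpec (F ω) P Q) / fullJointSpec X Y n m P Q

def permAct {X : Type*} {n : ℕ} (σ : Equiv.Perm (Fin n)) (x : Fin n → X) : Fin n → X :=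
  fun i => x (σ.symm i)

noncomputable def entH {X : Type*} [Fintype X] (P : X → ℝ) : ℝ :=
  ∑ a, -(P a * Real.log (P a))

noncomputable def binEnt (x : ℝ) : ℝ := -(x * Real.log x) - (1 - x) * Real.log (1 - x)

noncomputable def deltaGV {K : Type*} [Fintype K] [Field K] {n m : ℕ}
    (A : Matrix (Fin n) (Fin m) K) : ℝ :=
  1 - sSup ((fun x : Fin n → K => empDist (Matrix.vecMul x A) 0) '' {x | x ≠ 0})


lemma pow_eq_exp_aux (t : ℝ) (ht : 0 ≤ t) (k : ℕ) (h : t = 0 → k = 0) :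
    t ^ k = Real.exp (k * Real.log t) := by
  rcases eq_or_lt_of_le ht with h0 | h0
  · rcases Nat.eq_zero_or_pos k with hk | hk
    · simp [hk]
    · exact absurd (h h0.symm) hk.ne'
  · rw [← Real.log_pow, Real.exp_log (pow_pos h0 k)]

lemma count_wt_le {K : Type*} [Fintype K] [Field K] {m : ℕ} (hm : 0 < m)
    (w : ℕ) (hw : w ≤ m) :
    ((univ.filter fun y : Fin m → K => (univ.filter fun i => y i ≠ 0).card = w).card : ℝ)
      ≤ Real.exp (m * (binEnt ((w : ℝ) / m) +
          (w : ℝ) / m * Real.log ((Fintype.card K : ℝ) - 1))) := by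
  have hq : (2 : ℕ) ≤ Fintype.card K := Fintype.one_lt_card
  have hq1 : (1 : ℝ) ≤ (Fintype.card K : ℝ) - 1 := by
    have : (2 : ℝ) ≤ (Fintype.card K : ℝ) := by exact_mod_cast hq
    linarith
  set δ : ℝ := (w : ℝ) / m with hδ
  have hmR : (0 : ℝ) < m := by exact_mod_cast hm
  have hδ0 : 0 ≤ δ := by positivity
  have hδ1 : δ ≤ 1 := by
    rw [hδ, div_le_one hmR]; exact_mod_cast hw
  set p : K → ℝ := fun a => if a = 0 then 1 - δ else δ / ((Fintype.card K : ℝ) - 1) with hp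
  have hpnn : ∀ a, 0 ≤ p a := by
    intro a; rw [hp]; dsimp only
    split
    · linarith
    · positivity
  have h1 : (univ.filter fun a : K => a = 0) = {0} := by
    ext a; simp
  have h2 : (univ.filter fun a : K => ¬ a = 0).card = Fintype.card K - 1 := by
    have h3 := Finset.card_filter_add_card_filter_not (s := (univ : Finset K))
      (fun a : K => a = 0)
    rw [h1] at h3
    simp only [Finset.card_singleton, Finset.card_univ] at h3
    omega
  have hsum : ∑ a, p a = 1 := by
    rw [hp]
    dsimp only
    rw [Finset.sum_ite, Finset.sum_const, Finset.sum_const, h1, h2]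
    have hc1 : ((Fintype.card K - 1 : ℕ) : ℝ) = (Fintype.card K : ℝ) - 1 := by
      have : (1:ℕ) ≤ Fintype.card K := by omega
      push_cast [this]; ring
    rw [Finset.card_singleton, nsmul_eq_mul, nsmul_eq_mul, hc1]
    have hne : (Fintype.card K : ℝ) - 1 ≠ 0 := by linarith
    field_simp
    push_cast; ring
  set g : ℝ := binEnt δ + δ * Real.log ((Fintype.card K : ℝ) - 1) with hg
  have hmδ : (m : ℝ) * δ = w := by rw [hδ]; field_simp
  have hprod : ∀ y : Fin m → K, (univ.filter fun i => y i ≠ 0).card = w →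
      ∏ i, p (y i) = Real.exp (-((m : ℝ) * g)) := by
    intro y hy
    have hsplit := Finset.prod_filter_mul_prod_filter_not univ (fun i => y i ≠ 0)
      (fun i => p (y i))
    have hA : ∏ i ∈ univ.filter (fun i => y i ≠ 0), p (y i)
        = (δ / ((Fintype.card K : ℝ) - 1)) ^ w := by
      rw [Finset.prod_congr rfl (fun i hi => ?_), Finset.prod_const, hy]
      rw [Finset.mem_filter] at hi
      rw [hp]; simp [hi.2]
    have hcardz : (univ.filter fun i => ¬ y i ≠ 0).card = m - w := by
      have h3 := Finset.card_filter_add_card_filter_not (s := (univ : Finset (Fin m)))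
        (fun i => y i ≠ 0)
      rw [hy] at h3
      simp only [Finset.card_univ, Fintype.card_fin] at h3
      omega
    have hB : ∏ i ∈ univ.filter (fun i => ¬ y i ≠ 0), p (y i)
        = (1 - δ) ^ (m - w) := by
      rw [Finset.prod_congr rfl (fun i hi => ?_), Finset.prod_const, hcardz]
      rw [Finset.mem_filter] at hi
      have : y i = 0 := not_not.mp hi.2
      rw [hp]; simp [this]
    have e1 : (δ / ((Fintype.card K : ℝ) - 1)) ^ w
        = Real.exp (w * (Real.log δ - Real.log ((Fintype.card K : ℝ) - 1))) := by
      rcases Nat.eq_zero_or_pos w with hw0 | hw0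
      · simp [hw0]
      · have hδpos : 0 < δ := div_pos (by exact_mod_cast hw0) hmR
        have hdp : 0 < δ / ((Fintype.card K : ℝ) - 1) := div_pos hδpos (by linarith)
        rw [pow_eq_exp_aux _ hdp.le _ (fun hcon => absurd hcon hdp.ne'),
          Real.log_div hδpos.ne' (by linarith)]
    have e2 : (1 - δ) ^ (m - w) = Real.exp ((m - w : ℕ) * Real.log (1 - δ)) := by
      apply pow_eq_exp_aux _ (by linarith)
      intro hcon
      have : δ = 1 := by linarith
      have : (w : ℝ) = m := by
        rw [← hmδ, this]; ring
      have : w = m := by exact_mod_cast this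
      omega
    rw [← hsplit, hA, hB, e1, e2, ← Real.exp_add]
    congr 1
    have hcast : ((m - w : ℕ) : ℝ) = (m : ℝ) - w := by
      push_cast [hw]; ring
    rw [hcast, hg]
    unfold binEnt
    linear_combination (Real.log (1 - δ) + Real.log ((Fintype.card K : ℝ) - 1) - Real.log δ) * hmδ
  have hkey : ((univ.filter fun y : Fin m → K =>
      (univ.filter fun i => y i ≠ 0).card = w).card : ℝ) * Real.exp (-((m : ℝ) * g)) ≤ 1 := by
    have htot : ∑ y : Fin m → K, ∏ i, p (y i) = 1 := by
      rw [← Fintype.piFinset_univ, ← Finset.prod_univ_sum]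
      rw [Finset.prod_congr rfl (fun i _ => hsum), Finset.prod_const, one_pow]
    calc ((univ.filter fun y : Fin m → K =>
          (univ.filter fun i => y i ≠ 0).card = w).card : ℝ) * Real.exp (-((m : ℝ) * g))
        = ∑ y ∈ univ.filter (fun y : Fin m → K =>
            (univ.filter fun i => y i ≠ 0).card = w), ∏ i, p (y i) := by
          rw [Finset.sum_congr rfl (fun y hy => hprod y (Finset.mem_filter.mp hy).2),
            Finset.sum_const, nsmul_eq_mul]
      _ ≤ ∑ y : Fin m → K, ∏ i, p (y i) := by
          apply Finset.sum_le_sum_of_subset_of_nonneg (Finset.filter_subset _ _)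
          intro y _ _
          exact Finset.prod_nonneg fun i _ => hpnn (y i)
      _ = 1 := htot
  have hepos := Real.exp_pos (-((m : ℝ) * g))
  have hee : Real.exp ((m : ℝ) * g) * Real.exp (-((m : ℝ) * g)) = 1 := by
    rw [← Real.exp_add]; simp
  nlinarith [hkey, hepos, hee]

lemma one_sub_empDist {K : Type*} [Fintype K] [Field K] {m : ℕ} (hm : 0 < m)
    (y : Fin m → K) :
    1 - empDist y 0 = ((univ.filter fun i => y i ≠ 0).card : ℝ) / m := by
  have h3 := Finset.card_filter_add_card_filter_not (s := (univ : Finset (Fin m)))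
    (fun i => y i = 0)
  simp only [Finset.card_univ, Fintype.card_fin] at h3
  have hle : (univ.filter fun i => y i = 0).card ≤ m := by omega
  unfold empDist
  have hmR : (0 : ℝ) < m := by exact_mod_cast hm
  have hcast : ((univ.filter fun i => ¬ y i = 0).card : ℝ)
      = (m : ℝ) - ((univ.filter fun i => y i = 0).card : ℝ) := by
    have : (univ.filter fun i => ¬ y i = 0).card = m - (univ.filter fun i => y i = 0).card := by
      omega
    rw [this]; push_cast [hle]; ring
  simp only [ne_eq, hcast]
  field_simp

lemma badY_le {K : Type*} [Fintype K] [Field K] {m : ℕ} (hm : 0 < m) (β : ℝ) :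
    ((univ.filter fun y : Fin m → K =>
        binEnt (1 - empDist y 0) + (1 - empDist y 0) * Real.log ((Fintype.card K : ℝ) - 1)
          < β).card : ℝ)
      ≤ ((m : ℝ) + 1) * Real.exp (m * β) := by
  set badY := univ.filter fun y : Fin m → K =>
    binEnt (1 - empDist y 0) + (1 - empDist y 0) * Real.log ((Fintype.card K : ℝ) - 1) < β
    with hbadY
  have hmem : ∀ y ∈ badY, (univ.filter fun i => y i ≠ 0).card ∈ Finset.range (m + 1) := by
    intro y _
    rw [Finset.mem_range]
    have := Finset.card_filter_le (univ : Finset (Fin m)) (fun i => y i ≠ 0)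
    simp only [Finset.card_univ, Fintype.card_fin] at this
    omega
  rw [Finset.card_eq_sum_card_fiberwise hmem]
  push_cast
  have hbound : ∀ w ∈ Finset.range (m + 1),
      ((badY.filter fun y => (univ.filter fun i => y i ≠ 0).card = w).card : ℝ)
        ≤ Real.exp (m * β) := by
    intro w hwr
    rw [Finset.mem_range] at hwr
    have hw : w ≤ m := by omega
    by_cases hne : (badY.filter fun y => (univ.filter fun i => y i ≠ 0).card = w).Nonempty
    case neg =>
      rw [Finset.not_nonempty_iff_eq_empty.mp hne]
      simp [(Real.exp_pos _).le]
    case pos =>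
      obtain ⟨y0, hy0⟩ := hne
      rw [Finset.mem_filter] at hy0
      have hy0b := Finset.mem_filter.mp hy0.1
      have hβ : binEnt ((w : ℝ) / m) + (w : ℝ) / m * Real.log ((Fintype.card K : ℝ) - 1) < β := by
        have := hy0b.2
        rwa [one_sub_empDist hm, hy0.2] at this
      have hsub : (badY.filter fun y => (univ.filter fun i => y i ≠ 0).card = w)
          ⊆ univ.filter fun y : Fin m → K => (univ.filter fun i => y i ≠ 0).card = w := by
        intro y hy
        rw [Finset.mem_filter] at hy ⊢
        exact ⟨Finset.mem_univ _, hy.2⟩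
      calc ((badY.filter fun y => (univ.filter fun i => y i ≠ 0).card = w).card : ℝ)
          ≤ ((univ.filter fun y : Fin m → K =>
              (univ.filter fun i => y i ≠ 0).card = w).card : ℝ) := by
            exact_mod_cast Finset.card_le_card hsub
        _ ≤ Real.exp (m * (binEnt ((w : ℝ) / m) +
              (w : ℝ) / m * Real.log ((Fintype.card K : ℝ) - 1))) := count_wt_le hm w hw
        _ ≤ Real.exp (m * β) := by
            apply Real.exp_le_exp.mpr
            have hmR : (0 : ℝ) < m := by exact_mod_cast hm
            nlinarith
  calc ∑ w ∈ Finset.range (m + 1),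
        ((badY.filter fun y => (univ.filter fun i => y i ≠ 0).card = w).card : ℝ)
      ≤ ∑ _w ∈ Finset.range (m + 1), Real.exp (m * β) := Finset.sum_le_sum hbound
    _ = ((m : ℝ) + 1) * Real.exp (m * β) := by
        rw [Finset.sum_const, Finset.card_range, nsmul_eq_mul]; push_cast; ring

lemma fiber_le {K : Type*} [Fintype K] [Field K] {n mm : ℕ}
    (x : Fin n → K) (hx : x ≠ 0) (y : Fin mm → K) :
    ((univ.filter fun A : Matrix (Fin n) (Fin mm) K => Matrix.vecMul x A = y).card : ℕ)
      ≤ ((Fintype.card K) ^ mm) ^ (n - 1) := by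
  obtain ⟨i₀, hi₀⟩ : ∃ i, x i ≠ 0 := by
    by_contra hcon
    push_neg at hcon
    exact hx (funext hcon)
  have hcard : Fintype.card ({i : Fin n // i ≠ i₀} → Fin mm → K)
      = ((Fintype.card K) ^ mm) ^ (n - 1) := by
    rw [Fintype.card_fun, Fintype.card_fun]
    congr 1
    · rw [Fintype.card_fin]
    · rw [Fintype.card_subtype_compl, Fintype.card_subtype_eq, Fintype.card_fin]
  rw [← hcard, ← Finset.card_univ]
  apply Finset.card_le_card_of_injOn
    (fun A => fun i : {i : Fin n // i ≠ i₀} => A i.val)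
    (fun A _ => Finset.mem_univ _)
  intro A hA B hB hAB
  simp only [Finset.coe_filter, Set.mem_setOf_eq, Finset.mem_univ, true_and] at hA hB
  have hrow : ∀ i : Fin n, i ≠ i₀ → A i = B i := by
    intro i hi
    exact congrFun hAB ⟨i, hi⟩
  funext i j
  by_cases hii : i = i₀
  case neg => exact congrFun (hrow i hii) j
  subst hii
  have hj : ∑ i', x i' * A i' j = ∑ i', x i' * B i' j := by
    have h1 : Matrix.vecMul x A j = Matrix.vecMul x B j := by rw [hA, hB]
    simpa [Matrix.vecMul, dotProduct] using h1
  have hsplitA := Finset.add_sum_erase univ (fun i' => x i' * A i' j) (Finset.mem_univ i)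
  have hsplitB := Finset.add_sum_erase univ (fun i' => x i' * B i' j) (Finset.mem_univ i)
  have herase : ∑ i' ∈ univ.erase i, x i' * A i' j = ∑ i' ∈ univ.erase i, x i' * B i' j := by
    apply Finset.sum_congr rfl
    intro i' hi'
    rw [hrow i' (Finset.mem_erase.mp hi').1]
  have : x i * A i j = x i * B i j := by
    rw [← hsplitA, ← hsplitB, herase] at hj
    simp only at hj
    exact add_right_cancel hj
  exact mul_left_cancel₀ hi₀ this

lemma badA_le {K : Type*} [Fintype K] [Field K] {n mm : ℕ} (hn : 0 < n) (β : ℝ) :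
    ((univ.filter fun A : Matrix (Fin n) (Fin mm) K =>
        binEnt (deltaGV A) + deltaGV A * Real.log ((Fintype.card K : ℝ) - 1) < β).card : ℕ)
      ≤ (Fintype.card K) ^ n *
          ((univ.filter fun y : Fin mm → K =>
            binEnt (1 - empDist y 0) + (1 - empDist y 0) * Real.log ((Fintype.card K : ℝ) - 1)
              < β).card * ((Fintype.card K ^ mm) ^ (n - 1))) := by
  set badY := univ.filter fun y : Fin mm → K =>
    binEnt (1 - empDist y 0) + (1 - empDist y 0) * Real.log ((Fintype.card K : ℝ) - 1) < β
    with hbadY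
  have hstep1 : (univ.filter fun A : Matrix (Fin n) (Fin mm) K =>
      binEnt (deltaGV A) + deltaGV A * Real.log ((Fintype.card K : ℝ) - 1) < β)
      ⊆ (univ.filter fun x : Fin n → K => x ≠ 0).biUnion
          (fun x => univ.filter fun A : Matrix (Fin n) (Fin mm) K =>
            Matrix.vecMul x A ∈ badY) := by
    intro A hA
    rw [Finset.mem_filter] at hA
    have hone : (fun _ : Fin n => (1 : K)) ∈ {x : Fin n → K | x ≠ 0} := by
      intro hcon
      exact one_ne_zero (congrFun hcon ⟨0, hn⟩)
    have hne : ((fun x : Fin n → K => empDist (Matrix.vecMul x A) 0) '' {x | x ≠ 0}).Nonempty :=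
      ⟨_, Set.mem_image_of_mem _ hone⟩
    have hfin : ((fun x : Fin n → K => empDist (Matrix.vecMul x A) 0) '' {x | x ≠ 0}).Finite :=
      Set.Finite.image _ (Set.toFinite _)
    obtain ⟨x₀, hx₀mem, hx₀eq⟩ := hne.csSup_mem hfin
    have hΔ : deltaGV A = 1 - empDist (Matrix.vecMul x₀ A) 0 := by
      unfold deltaGV
      rw [← hx₀eq]
    refine Finset.mem_biUnion.mpr ⟨x₀, ?_, ?_⟩
    · rw [Finset.mem_filter]; exact ⟨Finset.mem_univ _, hx₀mem⟩
    · rw [Finset.mem_filter]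
      refine ⟨Finset.mem_univ _, ?_⟩
      rw [hbadY, Finset.mem_filter]
      refine ⟨Finset.mem_univ _, ?_⟩
      rw [← hΔ]
      exact hA.2
  calc (univ.filter fun A : Matrix (Fin n) (Fin mm) K =>
        binEnt (deltaGV A) + deltaGV A * Real.log ((Fintype.card K : ℝ) - 1) < β).card
      ≤ ((univ.filter fun x : Fin n → K => x ≠ 0).biUnion
          (fun x => univ.filter fun A : Matrix (Fin n) (Fin mm) K =>
            Matrix.vecMul x A ∈ badY)).card := Finset.card_le_card hstep1
    _ ≤ ∑ x ∈ univ.filter fun x : Fin n → K => x ≠ 0,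
          (univ.filter fun A : Matrix (Fin n) (Fin mm) K =>
            Matrix.vecMul x A ∈ badY).card := Finset.card_biUnion_le
    _ ≤ ∑ _x ∈ univ.filter fun x : Fin n → K => x ≠ 0,
          badY.card * ((Fintype.card K ^ mm) ^ (n - 1)) := by
        apply Finset.sum_le_sum
        intro x hx
        rw [Finset.mem_filter] at hx
        have hfib : (univ.filter fun A : Matrix (Fin n) (Fin mm) K =>
            Matrix.vecMul x A ∈ badY).card
            = ∑ y ∈ badY, ((univ.filter fun A : Matrix (Fin n) (Fin mm) K =>
                Matrix.vecMul x A ∈ badY).filter fun A => Matrix.vecMul x A = y).card := by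
          apply Finset.card_eq_sum_card_fiberwise
          intro A hA
          exact (Finset.mem_filter.mp hA).2
        rw [hfib]
        calc ∑ y ∈ badY, ((univ.filter fun A : Matrix (Fin n) (Fin mm) K =>
              Matrix.vecMul x A ∈ badY).filter fun A => Matrix.vecMul x A = y).card
            ≤ ∑ _y ∈ badY, (Fintype.card K ^ mm) ^ (n - 1) := by
              apply Finset.sum_le_sum
              intro y _
              calc ((univ.filter fun A : Matrix (Fin n) (Fin mm) K =>
                    Matrix.vecMul x A ∈ badY).filter fun A => Matrix.vecMul x A = y).card
                  ≤ (univ.filter fun A : Matrix (Fin n) (Fin mm) K =>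
                      Matrix.vecMul x A = y).card :=
                    Finset.card_le_card
                      (Finset.filter_subset_filter _ (Finset.filter_subset _ _))
                _ ≤ (Fintype.card K ^ mm) ^ (n - 1) := fiber_le x hx.2 y
          _ = badY.card * ((Fintype.card K ^ mm) ^ (n - 1)) := by
              rw [Finset.sum_const, smul_eq_mul]
    _ ≤ (Fintype.card K) ^ n * (badY.card * ((Fintype.card K ^ mm) ^ (n - 1))) := by
        rw [Finset.sum_const, smul_eq_mul]
        apply Nat.mul_le_mul_right
        calc (univ.filter fun x : Fin n → K => x ≠ 0).card
            ≤ (univ : Finset (Fin n → K)).card := Finset.card_le_card (Finset.filter_subset _ _)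
          _ = (Fintype.card K) ^ n := by
              rw [Finset.card_univ, Fintype.card_fun, Fintype.card_fin]

theorem stmt16 {K : Type*} [Fintype K] [Field K]
    (m : ℕ → ℕ) (hm : ∀ n, 0 < m n) (Rbar : ℝ)
    (hR : ∀ ε > (0 : ℝ), ∀ᶠ n : ℕ in atTop, (n : ℝ) / (m n : ℝ) ≤ Rbar + ε) :
    ∀ β < (1 - Rbar) * Real.log (Fintype.card K),
      Tendsto (fun n =>
        ((univ.filter fun A : Matrix (Fin n) (Fin (m n)) K =>
            binEnt (deltaGV A) + deltaGV A * Real.log ((Fintype.card K : ℝ) - 1) < β).card : ℝ) /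
          (Fintype.card (Matrix (Fin n) (Fin (m n)) K) : ℝ))
        atTop (nhds 0) := by
  intro β hβ
  have hq2 : 2 ≤ Fintype.card K := Fintype.one_lt_card
  have hqR : (2 : ℝ) ≤ (Fintype.card K : ℝ) := by exact_mod_cast hq2
  set L : ℝ := Real.log (Fintype.card K) with hL
  have hLpos : 0 < L := Real.log_pos (by linarith)
  -- m n → ∞
  have hmtop : Tendsto (fun n => (m n : ℝ)) atTop atTop := by
    rw [tendsto_atTop]
    intro b
    filter_upwards [hR 1 one_pos, eventually_ge_atTop 1,
      eventually_gt_atTop ⌈(Rbar + 1) * (max b 0)⌉₊] with n hn1 hn2 hn3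
    by_contra hcon
    push_neg at hcon
    have hmpos : (0 : ℝ) < m n := by exact_mod_cast hm n
    have hnpos : (0 : ℝ) < n := by exact_mod_cast hn2
    have hRpos : 0 < Rbar + 1 := lt_of_lt_of_le (div_pos hnpos hmpos) hn1
    have h4 : (n : ℝ) ≤ (Rbar + 1) * m n := (div_le_iff₀ hmpos).mp hn1
    have h5 : (n : ℝ) ≤ (Rbar + 1) * (max b 0) := by
      refine h4.trans (mul_le_mul_of_nonneg_left ?_ hRpos.le)
      exact le_trans hcon.le (le_max_left _ _)
    have h6 : (n : ℝ) ≤ (⌈(Rbar + 1) * (max b 0)⌉₊ : ℝ) := h5.trans (Nat.le_ceil _)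
    have h7 : n ≤ ⌈(Rbar + 1) * (max b 0)⌉₊ := by exact_mod_cast h6
    omega
  -- choose ε and decay constant
  set ε : ℝ := ((1 - Rbar) * L - β) / (2 * L) with hε
  have hεpos : 0 < ε := by
    apply div_pos (by linarith) (by linarith)
  set C : ℝ := (1 - Rbar - ε) * L - β with hC
  have hCpos : 0 < C := by
    rw [hC, hε]
    field_simp
    nlinarith
  -- the dominating sequence
  set b : ℕ → ℝ := fun n => ((m n : ℝ) + 1) * Real.exp (-(C * m n)) with hb
  have hqexp : ∀ k : ℕ, ((Fintype.card K : ℝ)) ^ k = Real.exp (k * L) := fun k =>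
    pow_eq_exp_aux _ (by linarith) k (fun hc => by simp [hc] at hqR; linarith)
  -- eventual bound of the fraction by b
  have hfb : ∀ᶠ n : ℕ in atTop,
      ((univ.filter fun A : Matrix (Fin n) (Fin (m n)) K =>
          binEnt (deltaGV A) + deltaGV A * Real.log ((Fintype.card K : ℝ) - 1) < β).card : ℝ) /
        (Fintype.card (Matrix (Fin n) (Fin (m n)) K) : ℝ) ≤ b n := by
    filter_upwards [hR ε hεpos, eventually_ge_atTop 1] with n hn1 hn2
    have hmn := hm n
    have hmpos : (0 : ℝ) < m n := by exact_mod_cast hmn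
    have hD : (Fintype.card (Matrix (Fin n) (Fin (m n)) K) : ℝ)
        = Real.exp ((n : ℝ) * (m n : ℝ) * L) := by
      rw [Fintype.card_congr (Matrix.of (m := Fin n) (n := Fin (m n)) (α := K)).symm,
        Fintype.card_fun, Fintype.card_fun, Fintype.card_fin, Fintype.card_fin, ← pow_mul]
      rw [Nat.cast_pow, hqexp (m n * n)]
      congr 1
      push_cast
      ring
    have hBn := badA_le (K := K) (n := n) (mm := m n) hn2 β
    have hY := badY_le (K := K) (m := m n) hmn β
    have hBnR : ((univ.filter fun A : Matrix (Fin n) (Fin (m n)) K =>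
        binEnt (deltaGV A) + deltaGV A * Real.log ((Fintype.card K : ℝ) - 1) < β).card : ℝ)
        ≤ (Fintype.card K : ℝ) ^ n *
            (((univ.filter fun y : Fin (m n) → K =>
              binEnt (1 - empDist y 0) + (1 - empDist y 0) * Real.log ((Fintype.card K : ℝ) - 1)
                < β).card : ℝ) * (((Fintype.card K : ℝ) ^ (m n)) ^ (n - 1))) := by
      exact_mod_cast hBn
    rw [div_le_iff₀ (by rw [hD]; exact Real.exp_pos _)]
    have e3 : (((Fintype.card K : ℝ)) ^ (m n)) ^ (n - 1)
        = Real.exp ((m n : ℝ) * ((n : ℝ) - 1) * L) := by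
      rw [← pow_mul, hqexp]
      congr 1
      push_cast [Nat.cast_sub hn2]
      ring
    calc ((univ.filter fun A : Matrix (Fin n) (Fin (m n)) K =>
          binEnt (deltaGV A) + deltaGV A * Real.log ((Fintype.card K : ℝ) - 1) < β).card : ℝ)
        ≤ (Fintype.card K : ℝ) ^ n *
            (((univ.filter fun y : Fin (m n) → K =>
              binEnt (1 - empDist y 0) + (1 - empDist y 0) * Real.log ((Fintype.card K : ℝ) - 1)
                < β).card : ℝ) * (((Fintype.card K : ℝ) ^ (m n)) ^ (n - 1))) := hBnR
      _ ≤ (Fintype.card K : ℝ) ^ n *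
            ((((m n : ℝ) + 1) * Real.exp ((m n : ℝ) * β))
              * (((Fintype.card K : ℝ) ^ (m n)) ^ (n - 1))) := by
          apply mul_le_mul_of_nonneg_left _ (by positivity)
          apply mul_le_mul_of_nonneg_right hY (by positivity)
      _ = ((m n : ℝ) + 1) * (Real.exp ((n : ℝ) * L) * Real.exp ((m n : ℝ) * β)
            * Real.exp ((m n : ℝ) * ((n : ℝ) - 1) * L)) := by
          rw [hqexp n, e3]; ring
      _ = ((m n : ℝ) + 1) * Real.exp ((n : ℝ) * L + (m n : ℝ) * β
            + (m n : ℝ) * ((n : ℝ) - 1) * L) := by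
          rw [← Real.exp_add, ← Real.exp_add]
      _ ≤ ((m n : ℝ) + 1) * Real.exp (-(C * m n) + (n : ℝ) * (m n : ℝ) * L) := by
          apply mul_le_mul_of_nonneg_left _ (by positivity)
          apply Real.exp_le_exp.mpr
          have h4 : (n : ℝ) ≤ (Rbar + ε) * m n := (div_le_iff₀ hmpos).mp hn1
          have h5 : (n : ℝ) * L ≤ (Rbar + ε) * m n * L :=
            mul_le_mul_of_nonneg_right h4 hLpos.le
          rw [hC]
          nlinarith [h5]
      _ = b n * Real.exp ((n : ℝ) * (m n : ℝ) * L) := by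
          rw [hb, Real.exp_add]; ring
      _ = b n * (Fintype.card (Matrix (Fin n) (Fin (m n)) K) : ℝ) := by rw [hD]
  -- b → 0
  have hbz : Tendsto b atTop (nhds 0) := by
    have h1 := Real.tendsto_pow_mul_exp_neg_atTop_nhds_zero 1
    have h2 := Real.tendsto_exp_neg_atTop_nhds_zero
    have h3 : Tendsto (fun u : ℝ => (u / C + 1) * Real.exp (-u)) atTop (nhds 0) := by
      have h4 := (h1.const_mul (1 / C)).add h2
      simp only [mul_zero, add_zero, zero_add] at h4
      apply h4.congr
      intro u
      ring
    have h5 : Tendsto (fun n : ℕ => C * (m n : ℝ)) atTop atTop :=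
      hmtop.const_mul_atTop hCpos
    have h6 := h3.comp h5
    apply h6.congr
    intro n
    simp only [Function.comp_apply, hb]
    congr 2
    field_simp
  -- conclude
  apply squeeze_zero' (Eventually.of_forall fun n => ?_) hfb hbz
  exact div_nonneg (Nat.cast_nonneg _) (Nat.cast_nonneg _)
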